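/- Let φ : ℝ → ℝ be twice differentiable with |φ''(z)| ≤ H for all z. Let f(x; W) = ∑_{j=1}^m a_j φ(⟨w_j, x⟩) where a_j² = 1/m for each j. Then for any matrices W, V ∈ ℝ^{m×d} and any x ∈ ℝ^d, |f(x;W) − f(x;V) − ⟨∇_W f(x;V), W−V⟩| ≤ (H‖x‖²)/(2√m) · ‖W−V‖_F², where ∇_W f(x;V) has rows a_j φ'(⟨v_j,x⟩) x^T. -/

import Mathlib

open Real Finset intervalIntegral
open scoped RealInnerProductSpace

lemma abs_int_helper (c : ℝ) : ∫ t in (0:ℝ)..c, |t| = c * |c| / 2 := by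
  rcases le_or_gt 0 c with h | h
  · rw [intervalIntegral.integral_congr (g := fun t => t) ?_, integral_id]
    · rw [abs_of_nonneg h]; ring
    · intro t ht
      rw [Set.uIcc_of_le h] at ht
      exact abs_of_nonneg ht.1
  · rw [intervalIntegral.integral_congr (g := fun t => -t) ?_]
    · rw [intervalIntegral.integral_neg, integral_id, abs_of_neg h]; ring
    · intro t ht
      rw [Set.uIcc_of_ge h.le] at ht
      exact abs_of_nonpos ht.2

lemma taylor1 (φ φ' φ'' : ℝ → ℝ)
    (hφ' : ∀ z, HasDerivAt φ (φ' z) z)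
    (hφ'' : ∀ z, HasDerivAt φ' (φ'' z) z)
    (H : ℝ) (hH : ∀ z, |φ'' z| ≤ H) (a b : ℝ) :
    |φ b - φ a - φ' a * (b - a)| ≤ H / 2 * (b - a) ^ 2 := by
  have hH0 : 0 ≤ H := le_trans (abs_nonneg _) (hH 0)
  have hc : Continuous φ' := by
    rw [continuous_iff_continuousAt]; exact fun z => (hφ'' z).continuousAt
  have lip : ∀ s t : ℝ, |φ' t - φ' s| ≤ H * |t - s| := by
    intro s t
    have := Convex.norm_image_sub_le_of_norm_hasDerivWithin_le
      (f := φ') (f' := φ'') (s := Set.univ) (C := H)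
      (fun z _ => (hφ'' z).hasDerivWithinAt) (fun z _ => hH z)
      convex_univ (Set.mem_univ s) (Set.mem_univ t)
    simpa using this
  have key : ∫ t in a..b, (φ' t - φ' a) = φ b - φ a - φ' a * (b - a) := by
    rw [intervalIntegral.integral_sub (hc.intervalIntegrable a b)
      (intervalIntegrable_const)]
    rw [intervalIntegral.integral_eq_sub_of_hasDerivAt (fun z _ => hφ' z)
      (hc.intervalIntegrable a b)]
    simp [smul_eq_mul]; ring
  have hgi : IntervalIntegrable (fun t => H * |t - a|) MeasureTheory.volume a b :=
    (continuous_const.mul ((continuous_id.sub continuous_const).abs)).intervalIntegrable a b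
  calc |φ b - φ a - φ' a * (b - a)|
      = ‖∫ t in a..b, (φ' t - φ' a)‖ := by rw [key]; rfl
    _ ≤ abs (∫ t in a..b, H * |t - a|) := by
        apply intervalIntegral.norm_integral_le_abs_of_norm_le ?_ hgi
        filter_upwards with t
        calc ‖φ' t - φ' a‖ = |φ' t - φ' a| := rfl
          _ ≤ H * |t - a| := lip a t
    _ = H / 2 * (b - a) ^ 2 := by
        rw [intervalIntegral.integral_const_mul]
        have : ∫ t in a..b, |t - a| = (b - a) * |b - a| / 2 := by
          have h1 := intervalIntegral.integral_comp_sub_right (a := a) (b := b) (fun t => |t|) a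
          rw [show a - a = 0 by ring] at h1
          rw [h1, abs_int_helper]
        rw [this, abs_mul, abs_div]
        rw [abs_of_nonneg hH0, abs_mul, abs_abs, ← sq_abs (b - a)]
        norm_num
        ring

/-- Smoothness of the two-layer network output in its first-layer weights
(rows `W j`, `V j`), for an activation with second derivative bounded by `H`. -/
theorem network_output_smooth {d m : ℕ} (hm : 0 < m)
    (φ φ' φ'' : ℝ → ℝ)
    (hφ' : ∀ z, HasDerivAt φ (φ' z) z)
    (hφ'' : ∀ z, HasDerivAt φ' (φ'' z) z)
    (H : ℝ) (hH : ∀ z, |φ'' z| ≤ H)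
    (a : Fin m → ℝ) (ha : ∀ j, (a j) ^ 2 = 1 / (m : ℝ))
    (W V : Fin m → EuclideanSpace ℝ (Fin d)) (x : EuclideanSpace ℝ (Fin d)) :
    |(∑ j, a j * φ ⟪W j, x⟫) - (∑ j, a j * φ ⟪V j, x⟫)
        - (∑ j, a j * φ' ⟪V j, x⟫ * ⟪W j - V j, x⟫)|
      ≤ H * ‖x‖ ^ 2 / (2 * Real.sqrt m) * (∑ j, ‖W j - V j‖ ^ 2) := by
  have hH0 : 0 ≤ H := le_trans (abs_nonneg _) (hH 0)
  have hsm : (0:ℝ) < Real.sqrt m := Real.sqrt_pos.2 (by exact_mod_cast hm)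
  have haj : ∀ j, |a j| = 1 / Real.sqrt m := by
    intro j
    rw [← Real.sqrt_sq_eq_abs, ha j, one_div, one_div, Real.sqrt_inv]
  calc |(∑ j, a j * φ ⟪W j, x⟫) - (∑ j, a j * φ ⟪V j, x⟫)
        - (∑ j, a j * φ' ⟪V j, x⟫ * ⟪W j - V j, x⟫)|
      = |∑ j, a j * (φ ⟪W j, x⟫ - φ ⟪V j, x⟫
          - φ' ⟪V j, x⟫ * (⟪W j, x⟫ - ⟪V j, x⟫))| := by
        congr 1
        simp only [inner_sub_left]
        rw [← Finset.sum_sub_distrib, ← Finset.sum_sub_distrib]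
        exact Finset.sum_congr rfl fun j _ => by ring
    _ ≤ ∑ j, |a j * (φ ⟪W j, x⟫ - φ ⟪V j, x⟫
          - φ' ⟪V j, x⟫ * (⟪W j, x⟫ - ⟪V j, x⟫))| :=
        Finset.abs_sum_le_sum_abs _ _
    _ ≤ ∑ j, (1 / Real.sqrt m) * (H / 2 * (‖W j - V j‖ ^ 2 * ‖x‖ ^ 2)) := by
        refine Finset.sum_le_sum fun j _ => ?_
        rw [abs_mul, haj j]
        refine mul_le_mul_of_nonneg_left ?_ (by positivity)
        refine le_trans (taylor1 φ φ' φ'' hφ' hφ'' H hH _ _) ?_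
        refine mul_le_mul_of_nonneg_left ?_ (by positivity)
        have h1 : |⟪W j, x⟫ - ⟪V j, x⟫| ≤ ‖W j - V j‖ * ‖x‖ := by
          rw [← inner_sub_left]
          exact abs_real_inner_le_norm _ _
        calc (⟪W j, x⟫ - ⟪V j, x⟫) ^ 2 = |⟪W j, x⟫ - ⟪V j, x⟫| ^ 2 := (sq_abs _).symm
          _ ≤ (‖W j - V j‖ * ‖x‖) ^ 2 := by
              exact pow_le_pow_left₀ (abs_nonneg _) h1 2
          _ = ‖W j - V j‖ ^ 2 * ‖x‖ ^ 2 := by ring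
    _ = H * ‖x‖ ^ 2 / (2 * Real.sqrt m) * (∑ j, ‖W j - V j‖ ^ 2) := by
        rw [Finset.mul_sum]
        refine Finset.sum_congr rfl fun j _ => ?_
        field_simp
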